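/- Let H be a finite connected simple graph with no false twins, and let B = {v, w} be a biclique of H consisting of a single edge. If v and w have at least two common neighbors, then at least 3 bicliques of H distinct from B have nonempty intersection with B; equivalently, the vertex of KB(H) corresponding to B has degree at least 3. -/

import Mathlib

open SimpleGraph

variable {V : Type}

/-- `B1`, `B2` are the two (nonempty) parts of an induced complete bipartite subgraph:
they are disjoint, each part is independent, and all edges between the parts are present. -/
def IsCBP (H : SimpleGraph V) (B1 B2 : Set V) : Prop :=
  B1.Nonempty ∧ B2.Nonempty ∧ Disjoint B1 B2 ∧
    (∀ a ∈ B1, ∀ b ∈ B1, ¬H.Adj a b) ∧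
    (∀ a ∈ B2, ∀ b ∈ B2, ¬H.Adj a b) ∧
    (∀ a ∈ B1, ∀ b ∈ B2, H.Adj a b)

/-- A set of vertices inducing a complete bipartite subgraph `K_{m,n}`, `m, n ≥ 1`. -/
def IsCompleteBipartiteSet (H : SimpleGraph V) (S : Set V) : Prop :=
  ∃ B1 B2 : Set V, IsCBP H B1 B2 ∧ B1 ∪ B2 = S

/-- A biclique: a maximal set of vertices inducing a complete bipartite subgraph. -/
def IsBiclique (H : SimpleGraph V) (S : Set V) : Prop :=
  IsCompleteBipartiteSet H S ∧
    ∀ T : Set V, IsCompleteBipartiteSet H T → S ⊆ T → S = T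

/-- The biclique graph `KB(H)`: the intersection graph of the bicliques of `H`. -/
def KB (H : SimpleGraph V) : SimpleGraph {S : Set V // IsBiclique H S} :=
  SimpleGraph.fromRel fun A B => (A.1 ∩ B.1).Nonempty

lemma cbp_pair {H : SimpleGraph V} {a b : V} (h : H.Adj a b) :
    IsCompleteBipartiteSet H {a, b} := by
  refine ⟨{a}, {b}, ⟨⟨a, rfl⟩, ⟨b, rfl⟩, ?_, ?_, ?_, ?_⟩, rfl⟩
  · simpa [Set.disjoint_singleton] using h.ne
  · simp only [Set.mem_singleton_iff]; rintro p rfl q rfl; exact H.loopless.irrefl _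
  · simp only [Set.mem_singleton_iff]; rintro p rfl q rfl; exact H.loopless.irrefl _
  · simp only [Set.mem_singleton_iff]; rintro p rfl q rfl; exact h

lemma cbp_wedge {H : SimpleGraph V} {x a b : V} (hxa : H.Adj x a) (hxb : H.Adj x b)
    (hab : ¬H.Adj a b) (hne : a ≠ b) : IsCompleteBipartiteSet H ({x} ∪ {a, b}) := by
  refine ⟨{x}, {a, b}, ⟨⟨x, rfl⟩, ⟨a, Or.inl rfl⟩, ?_, ?_, ?_, ?_⟩, rfl⟩
  · rw [Set.disjoint_singleton_left]
    rintro (rfl | rfl); exacts [hxa.ne rfl, hxb.ne rfl]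
  · simp only [Set.mem_singleton_iff]; rintro p rfl q rfl; exact H.loopless.irrefl _
  · simp only [Set.mem_insert_iff, Set.mem_singleton_iff]
    rintro p (rfl | rfl) q (rfl | rfl)
    exacts [H.loopless.irrefl _, hab, fun h => hab h.symm, H.loopless.irrefl _]
  · simp only [Set.mem_singleton_iff, Set.mem_insert_iff]
    rintro p rfl q (rfl | rfl); exacts [hxa, hxb]

lemma exists_biclique_supset [Fintype V] {H : SimpleGraph V} {S : Set V}
    (hS : IsCompleteBipartiteSet H S) : ∃ T, IsBiclique H T ∧ S ⊆ T := by
  classical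
  have hfin : {T : Set V | IsCompleteBipartiteSet H T ∧ S ⊆ T}.Finite := Set.toFinite _
  obtain ⟨T, hT, hmax⟩ := Set.Finite.exists_maximal hfin ⟨S, hS, subset_rfl⟩
  exact ⟨T, ⟨hT.1, fun T' hT' hsub => le_antisymm hsub (hmax ⟨hT', hT.2.trans hsub⟩ hsub)⟩, hT.2⟩

lemma cbp_no_triangle {H : SimpleGraph V} {S : Set V} (hS : IsCompleteBipartiteSet H S)
    {a b c : V} (ha : a ∈ S) (hb : b ∈ S) (hc : c ∈ S)
    (hab : H.Adj a b) (hac : H.Adj a c) (hbc : H.Adj b c) : False := by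
  obtain ⟨B1, B2, ⟨-, -, -, h1, h2, -⟩, hU⟩ := hS
  rw [← hU] at ha hb hc
  rcases ha with ha | ha <;> rcases hb with hb | hb <;> rcases hc with hc | hc
  exacts [h1 _ ha _ hb hab, h1 _ ha _ hb hab, h1 _ ha _ hc hac, h2 _ hb _ hc hbc,
    h1 _ hb _ hc hbc, h2 _ ha _ hc hac, h2 _ ha _ hb hab, h2 _ ha _ hb hab]

lemma cbp_part_contra_aux {H : SimpleGraph V} {B1 B2 : Set V}
    (h1 : ∀ a ∈ B1, ∀ b ∈ B1, ¬H.Adj a b) (h2 : ∀ a ∈ B2, ∀ b ∈ B2, ¬H.Adj a b)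
    (h12 : ∀ a ∈ B1, ∀ b ∈ B2, H.Adj a b)
    {v x y z : V} (hv : v ∈ B1) (hx : x ∈ B1 ∪ B2) (hy : y ∈ B1 ∪ B2) (hz : z ∈ B1 ∪ B2)
    (hvx : H.Adj v x) (hvy : H.Adj v y) (hzx : H.Adj z x) (hzy : ¬H.Adj z y) : False := by
  have hx2 : x ∈ B2 := hx.resolve_left fun h => h1 _ hv _ h hvx
  have hy2 : y ∈ B2 := hy.resolve_left fun h => h1 _ hv _ h hvy
  rcases hz with hz | hz
  · exact hzy (h12 _ hz _ hy2)
  · exact h2 _ hz _ hx2 hzx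

lemma cbp_part_contra {H : SimpleGraph V} {S : Set V} (hS : IsCompleteBipartiteSet H S)
    {v x y z : V} (hv : v ∈ S) (hx : x ∈ S) (hy : y ∈ S) (hz : z ∈ S)
    (hvx : H.Adj v x) (hvy : H.Adj v y) (hzx : H.Adj z x) (hzy : ¬H.Adj z y) : False := by
  obtain ⟨B1, B2, ⟨-, -, -, h1, h2, h12⟩, hU⟩ := hS
  rw [← hU] at hv hx hy hz
  rcases hv with hv | hv
  · exact cbp_part_contra_aux h1 h2 h12 hv hx hy hz hvx hvy hzx hzy
  · exact cbp_part_contra_aux h2 h1 (fun a ha b hb => (h12 _ hb _ ha).symm) hv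
      (hx.symm.imp_left id) (hy.symm.imp_left id) (hz.symm.imp_left id) hvx hvy hzx hzy

lemma three_le_ncard {α : Type*} {s : Set α} (hfin : s.Finite) {a b c : α}
    (ha : a ∈ s) (hb : b ∈ s) (hc : c ∈ s) (hab : a ≠ b) (hac : a ≠ c) (hbc : b ≠ c) :
    3 ≤ s.ncard := by
  have h3 : ({a, b, c} : Set α).ncard = 3 := by
    rw [Set.ncard_insert_of_notMem (by simp [hab, hac]) (Set.toFinite _),
      Set.ncard_insert_of_notMem (by simp [hbc]) (Set.toFinite _), Set.ncard_singleton]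
  rw [← h3]
  exact Set.ncard_le_ncard (by simp [Set.insert_subset_iff, ha, hb, hc]) hfin

lemma aux3 [Fintype V] {H : SimpleGraph V} {v w x y z : V} (hadj : H.Adj v w)
    (hvx : H.Adj v x) (hwx : H.Adj w x) (hvy : H.Adj v y) (hwy : H.Adj w y)
    {A B' : Set V} (hA : IsBiclique H A) (hB : IsBiclique H B')
    (hAv : v ∈ A) (hAx : x ∈ A) (hAy : y ∈ A)
    (hBw : w ∈ B') (hBx : x ∈ B') (hBy : y ∈ B')
    (hzx : H.Adj x z) (hzy : ¬H.Adj y z) :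
    3 ≤ {S : Set V | IsBiclique H S ∧ S ≠ {v, w} ∧ (S ∩ {v, w}).Nonempty}.ncard := by
  classical
  have hzv : z ≠ v := by rintro rfl; exact hzy hvy.symm
  have hzw : z ≠ w := by rintro rfl; exact hzy hwy.symm
  have znot : z ∉ ({v, w} : Set V) := by rintro (rfl | rfl) <;> simp_all
  have xnot : x ∉ ({v, w} : Set V) := by
    rintro (rfl | rfl); exacts [H.loopless.irrefl _ hvx, H.loopless.irrefl _ hwx]
  have hvB : v ∉ B' := fun h => cbp_no_triangle hB.1 h hBw hBx hadj hvx hwx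
  have hAB : A ≠ B' := fun h => hvB (h ▸ hAv)
  have memA : A ∈ {S : Set V | IsBiclique H S ∧ S ≠ {v, w} ∧ (S ∩ {v, w}).Nonempty} :=
    ⟨hA, fun h => xnot (h ▸ hAx), ⟨v, hAv, Or.inl rfl⟩⟩
  have memB : B' ∈ {S : Set V | IsBiclique H S ∧ S ≠ {v, w} ∧ (S ∩ {v, w}).Nonempty} :=
    ⟨hB, fun h => xnot (h ▸ hBx), ⟨w, hBw, Or.inr rfl⟩⟩
  by_cases hvz : H.Adj v z
  · obtain ⟨U, hU, hUsub⟩ := exists_biclique_supset (cbp_pair hvz)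
    have hUv : v ∈ U := hUsub (Or.inl rfl)
    have hUz : z ∈ U := hUsub (Or.inr rfl)
    have hUA : A ≠ U := fun h =>
      cbp_no_triangle hA.1 (h ▸ hUz) hAv hAx hvz.symm hzx.symm hvx
    have hUB : B' ≠ U := fun h => hvB (h ▸ hUv)
    exact three_le_ncard (Set.toFinite _) memA memB
      ⟨hU, fun h => znot (h ▸ hUz), ⟨v, hUv, Or.inl rfl⟩⟩ hAB hUA hUB
  · obtain ⟨U, hU, hUsub⟩ :=
      exists_biclique_supset (cbp_wedge hvx.symm hzx hvz (fun h => hzv h.symm))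
    have hUv : v ∈ U := hUsub (Or.inr (Or.inl rfl))
    have hUz : z ∈ U := hUsub (Or.inr (Or.inr rfl))
    have hUA : A ≠ U := fun h =>
      cbp_part_contra hA.1 hAv hAx hAy (h ▸ hUz) hvx hvy hzx.symm
        (fun h' => hzy h'.symm)
    have hUB : B' ≠ U := fun h => hvB (h ▸ hUv)
    exact three_le_ncard (Set.toFinite _) memA memB
      ⟨hU, fun h => znot (h ▸ hUz), ⟨v, hUv, Or.inl rfl⟩⟩ hAB hUA hUB


/-- In a connected false-twin-free graph, if the edge biclique `B = {v, w}` has at least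
two common neighbors of `v` and `w`, then `B` meets at least 3 other bicliques. -/
theorem stmt_6 {V : Type} [Fintype V] (H : SimpleGraph V) (hconn : H.Connected)
    (htwinfree : ∀ v w : V, v ≠ w → H.neighborSet v ≠ H.neighborSet w)
    (v w : V) (hvw : v ≠ w) (hadj : H.Adj v w) (hB : IsBiclique H {v, w})
    (hcn : 2 ≤ (H.neighborSet v ∩ H.neighborSet w).ncard) :
    3 ≤ {S : Set V | IsBiclique H S ∧ S ≠ {v, w} ∧ (S ∩ {v, w}).Nonempty}.ncard := by
  classical
  obtain ⟨x, hx, y, hy, hxy⟩ :=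
    (Set.one_lt_ncard (Set.toFinite _)).mp (lt_of_lt_of_le one_lt_two hcn)
  have hvx : H.Adj v x := hx.1
  have hwx : H.Adj w x := hx.2
  have hvy : H.Adj v y := hy.1
  have hwy : H.Adj w y := hy.2
  have xnot : x ∉ ({v, w} : Set V) := by
    rintro (rfl | rfl); exacts [H.loopless.irrefl _ hvx, H.loopless.irrefl _ hwx]
  have ynot : y ∉ ({v, w} : Set V) := by
    rintro (rfl | rfl); exacts [H.loopless.irrefl _ hvy, H.loopless.irrefl _ hwy]
  obtain ⟨A, hA, hAsub⟩ := exists_biclique_supset (cbp_pair hvx)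
  obtain ⟨B', hB', hBsub⟩ := exists_biclique_supset (cbp_pair hwx)
  obtain ⟨C, hC, hCsub⟩ := exists_biclique_supset (cbp_pair hvy)
  obtain ⟨D, hD, hDsub⟩ := exists_biclique_supset (cbp_pair hwy)
  have hAv : v ∈ A := hAsub (Or.inl rfl)
  have hAx : x ∈ A := hAsub (Or.inr rfl)
  have hBw : w ∈ B' := hBsub (Or.inl rfl)
  have hBx : x ∈ B' := hBsub (Or.inr rfl)
  have hCv : v ∈ C := hCsub (Or.inl rfl)
  have hCy : y ∈ C := hCsub (Or.inr rfl)
  have hDw : w ∈ D := hDsub (Or.inl rfl)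
  have hDy : y ∈ D := hDsub (Or.inr rfl)
  have hvB : v ∉ B' := fun h => cbp_no_triangle hB'.1 h hBw hBx hadj hvx hwx
  have hvD : v ∉ D := fun h => cbp_no_triangle hD.1 h hDw hDy hadj hvy hwy
  have hwA : w ∉ A := fun h => cbp_no_triangle hA.1 hAv h hAx hadj hvx hwx
  have hwC : w ∉ C := fun h => cbp_no_triangle hC.1 hCv h hCy hadj hvy hwy
  have memA : A ∈ {S : Set V | IsBiclique H S ∧ S ≠ {v, w} ∧ (S ∩ {v, w}).Nonempty} :=
    ⟨hA, fun h => xnot (h ▸ hAx), ⟨v, hAv, Or.inl rfl⟩⟩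
  have memB : B' ∈ {S : Set V | IsBiclique H S ∧ S ≠ {v, w} ∧ (S ∩ {v, w}).Nonempty} :=
    ⟨hB', fun h => xnot (h ▸ hBx), ⟨w, hBw, Or.inr rfl⟩⟩
  have memC : C ∈ {S : Set V | IsBiclique H S ∧ S ≠ {v, w} ∧ (S ∩ {v, w}).Nonempty} :=
    ⟨hC, fun h => ynot (h ▸ hCy), ⟨v, hCv, Or.inl rfl⟩⟩
  have memD : D ∈ {S : Set V | IsBiclique H S ∧ S ≠ {v, w} ∧ (S ∩ {v, w}).Nonempty} :=
    ⟨hD, fun h => ynot (h ▸ hDy), ⟨w, hDw, Or.inr rfl⟩⟩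
  have hAB : A ≠ B' := fun h => hvB (h ▸ hAv)
  have hBC : B' ≠ C := fun h => hwC (h ▸ hBw)
  have hAD : A ≠ D := fun h => hvD (h ▸ hAv)
  by_cases hAC : A = C
  · by_cases hBD : B' = D
    · -- hard case: A ⊇ {v,x,y}, B' ⊇ {w,x,y}
      have hAy : y ∈ A := hAC ▸ hCy
      have hBy : y ∈ B' := hBD ▸ hDy
      have hNxy : H.neighborSet x ≠ H.neighborSet y := htwinfree x y hxy
      have : ∃ z, ¬(H.Adj x z ↔ H.Adj y z) := by
        by_contra h
        push_neg at h
        exact hNxy (Set.ext fun z => h z)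
      obtain ⟨z, hz⟩ := this
      by_cases hzx : H.Adj x z
      · have hzy : ¬H.Adj y z := fun h => hz ⟨fun _ => h, fun _ => hzx⟩
        exact aux3 hadj hvx hwx hvy hwy hA hB' hAv hAx hAy hBw hBx hBy hzx hzy
      · have hzy : H.Adj y z := by
          by_contra h
          exact hz ⟨fun h' => absurd h' hzx, fun h' => absurd h' h⟩
        exact aux3 hadj hvy hwy hvx hwx hA hB' hAv hAy hAx hBw hBy hBx hzy hzx
    · exact three_le_ncard (Set.toFinite _) memA memB memD hAB hAD hBD
  · exact three_le_ncard (Set.toFinite _) memA memB memC hAB hAC hBC
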